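/- For a, b > 0 with a + b ≤ 1 and a ≤ 1, b ≤ 1, the quantity θ(a,b) = -1 + (ab/(a+b))·(Γ(a+b+1)/(Γ(a+1)Γ(b+1)))² + ab/(a+b+1) satisfies θ(a,b) ≤ θ(1/2, 1) = -1/20 < 0. -/

import Mathlib

open MeasureTheory intervalIntegral

/-- Real Beta function identity, derived from the complex one. -/
lemma real_beta_aux {a b : ℝ} (ha : 0 < a) (hb : 0 < b) :
    Real.Gamma a * Real.Gamma b
      = Real.Gamma (a + b) * ∫ x in (0:ℝ)..1, x ^ (a - 1) * (1 - x) ^ (b - 1) := by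
  have h := Complex.Gamma_mul_Gamma_eq_betaIntegral (s := (a : ℂ)) (t := (b : ℂ))
    (by simpa using ha) (by simpa using hb)
  have hint : Complex.betaIntegral a b
      = ((∫ x in (0:ℝ)..1, x ^ (a - 1) * (1 - x) ^ (b - 1) : ℝ) : ℂ) := by
    rw [Complex.betaIntegral, ← intervalIntegral.integral_ofReal]
    refine intervalIntegral.integral_congr fun x hx => ?_
    rw [Set.uIcc_of_le (by norm_num : (0:ℝ) ≤ 1)] at hx
    push_cast
    rw [Complex.ofReal_cpow hx.1 (a - 1), Complex.ofReal_cpow (by linarith [hx.2]) (b - 1)]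
    push_cast
    ring
  rw [hint, show ((a:ℂ) + (b:ℂ)) = ((a + b : ℝ) : ℂ) by push_cast; ring,
    Complex.Gamma_ofReal, Complex.Gamma_ofReal, Complex.Gamma_ofReal] at h
  exact_mod_cast h

/-- Lower bound for the Beta integral. -/
lemma beta_lb {a b : ℝ} (ha : 0 < a) (hb : 0 < b) (ha1 : a ≤ 1) (hb1 : b ≤ 1) :
    1 / a + 1 / b - 1 ≤ ∫ x in (0:ℝ)..1, x ^ (a - 1) * (1 - x) ^ (b - 1) := by
  -- integrability of the beta integrand
  have hcc : IntervalIntegrable (fun x : ℝ => (x:ℂ) ^ ((a:ℂ) - 1) * (1 - (x:ℂ)) ^ ((b:ℂ) - 1))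
      MeasureTheory.volume 0 1 :=
    Complex.betaIntegral_convergent (by simpa using ha) (by simpa using hb)
  have hc2 : IntervalIntegrable (fun x : ℝ => ((x ^ (a - 1) * (1 - x) ^ (b - 1) : ℝ) : ℂ))
      MeasureTheory.volume 0 1 := by
    apply hcc.congr
    rw [Set.uIoc_of_le (by norm_num : (0:ℝ) ≤ 1)]
    intro x hx
    push_cast
    rw [Complex.ofReal_cpow hx.1.le (a - 1), Complex.ofReal_cpow (by linarith [hx.2]) (b - 1)]
    push_cast
    ring
  have hreal : IntervalIntegrable (fun x : ℝ => x ^ (a - 1) * (1 - x) ^ (b - 1))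
      MeasureTheory.volume 0 1 := by
    rw [intervalIntegrable_iff] at hc2 ⊢
    have h := hc2.re
    simp at h
    rw [Set.uIoc_of_le (by norm_num : (0:ℝ) ≤ 1)]
    exact h
  have hA' : IntervalIntegrable (fun x : ℝ => x ^ (a - 1)) MeasureTheory.volume 0 1 :=
    intervalIntegral.intervalIntegrable_rpow' (by linarith)
  have hB0 : IntervalIntegrable (fun x : ℝ => x ^ (b - 1)) MeasureTheory.volume 0 1 :=
    intervalIntegral.intervalIntegrable_rpow' (by linarith)
  have hB' : IntervalIntegrable (fun x : ℝ => (1 - x) ^ (b - 1)) MeasureTheory.volume 0 1 := by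
    have := hB0.comp_sub_left 1
    norm_num at this
    exact this.symm
  have hg : IntervalIntegrable (fun x : ℝ => x ^ (a - 1) + (1 - x) ^ (b - 1) - 1)
      MeasureTheory.volume 0 1 :=
    (hA'.add hB').sub intervalIntegrable_const
  have hpt : ∀ x ∈ Set.Icc (0:ℝ) 1,
      x ^ (a - 1) + (1 - x) ^ (b - 1) - 1 ≤ x ^ (a - 1) * (1 - x) ^ (b - 1) := by
    intro x hx
    rcases eq_or_lt_of_le hx.1 with h0 | h0
    · rw [← h0]
      simp [Real.one_rpow]
    rcases eq_or_lt_of_le hx.2 with h1 | h1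
    · rw [h1]
      simp [Real.one_rpow]
    · have hu := Real.one_le_rpow_of_pos_of_le_one_of_nonpos h0 hx.2 (by linarith : a - 1 ≤ 0)
      have hv := Real.one_le_rpow_of_pos_of_le_one_of_nonpos (by linarith : (0:ℝ) < 1 - x)
        (by linarith) (by linarith : b - 1 ≤ 0)
      nlinarith [hu, hv]
  have hmono := intervalIntegral.integral_mono_on (by norm_num : (0:ℝ) ≤ 1) hg hreal hpt
  have hA : (∫ x in (0:ℝ)..1, x ^ (a - 1)) = 1 / a := by
    rw [integral_rpow (Or.inl (by linarith))]
    rw [sub_add_cancel, Real.one_rpow, Real.zero_rpow (ne_of_gt ha)]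
    ring
  have hB : (∫ x in (0:ℝ)..1, (1 - x) ^ (b - 1)) = 1 / b := by
    have := intervalIntegral.integral_comp_sub_left (a := 0) (b := 1)
      (fun x : ℝ => x ^ (b - 1)) 1
    norm_num at this
    rw [this, integral_rpow (Or.inl (by linarith)),
      sub_add_cancel, Real.one_rpow, Real.zero_rpow (ne_of_gt hb)]
    ring
  have hgval : (∫ x in (0:ℝ)..1, (x ^ (a - 1) + (1 - x) ^ (b - 1) - 1))
      = 1 / a + 1 / b - 1 := by
    rw [intervalIntegral.integral_sub (hA'.add hB') intervalIntegrable_const,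
      intervalIntegral.integral_add hA' hB', hA, hB]
    simp
  rw [hgval] at hmono
  exact hmono

theorem stmt_14 (a b : ℝ) (ha : 0 < a) (hb : 0 < b) (ha1 : a ≤ 1) (hb1 : b ≤ 1)
    (hab : a + b ≤ 1) :
    -1 + a * b / (a + b) * (Real.Gamma (a + b + 1) / (Real.Gamma (a + 1) * Real.Gamma (b + 1))) ^ 2
        + a * b / (a + b + 1) ≤ -1/20 ∧
    -1 + (1/2 : ℝ) * 1 / ((1/2 : ℝ) + 1)
        * (Real.Gamma ((1/2 : ℝ) + 1 + 1) / (Real.Gamma ((1/2 : ℝ) + 1) * Real.Gamma (1 + 1))) ^ 2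
        + (1/2 : ℝ) * 1 / ((1/2 : ℝ) + 1 + 1) = -1/20 := by
  constructor
  · have hs : 0 < a + b := by linarith
    have hGs := Real.Gamma_pos_of_pos hs
    have hp : 0 < a * b := mul_pos ha hb
    obtain ⟨I, hI, hIlb⟩ : ∃ I : ℝ, Real.Gamma a * Real.Gamma b = Real.Gamma (a + b) * I
        ∧ 1 / a + 1 / b - 1 ≤ I :=
      ⟨_, real_beta_aux ha hb, beta_lb ha hb ha1 hb1⟩
    have hkey : 0 < a + b - a * b := by nlinarith
    have hIlb' : (a + b - a * b) / (a * b) ≤ I := by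
      have he : (a + b - a * b) / (a * b) = 1 / a + 1 / b - 1 := by
        field_simp
        ring
      rw [he]
      exact hIlb
    have hIpos : 0 < I := lt_of_lt_of_le (div_pos hkey hp) hIlb'
    have habI : a + b - a * b ≤ a * b * I := by
      rw [div_le_iff₀ hp] at hIlb'
      linarith [hIlb']
    have hR : Real.Gamma (a + b + 1) / (Real.Gamma (a + 1) * Real.Gamma (b + 1))
        = (a + b) / (a * b * I) := by
      rw [Real.Gamma_add_one (ne_of_gt ha), Real.Gamma_add_one (ne_of_gt hb),
        Real.Gamma_add_one (ne_of_gt hs)]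
      have hden : a * Real.Gamma a * (b * Real.Gamma b) = a * b * I * Real.Gamma (a + b) := by
        linear_combination (a * b) * hI
      rw [hden, show (a + b) * Real.Gamma (a + b) / (a * b * I * Real.Gamma (a + b))
          = (a + b) / (a * b * I) from
        mul_div_mul_right _ _ (ne_of_gt hGs)]
    rw [hR]
    have hpI : 0 < a * b * I := mul_pos hp hIpos
    have hEq : a * b / (a + b) * ((a + b) / (a * b * I)) ^ 2 = (a + b) / (a * b * I ^ 2) := by
      field_simp
    rw [hEq]
    have hstep : (a + b) / (a * b * I ^ 2) ≤ (a + b) * (a * b) / (a + b - a * b) ^ 2 := by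
      rw [div_le_div_iff₀ (by positivity) (by positivity)]
      have hsq : (a + b - a * b) ^ 2 ≤ (a * b * I) ^ 2 := by nlinarith [habI, hkey.le]
      nlinarith [mul_le_mul_of_nonneg_left hsq hs.le]
    have hfin : (a + b) * (a * b) / (a + b - a * b) ^ 2 + a * b / (a + b + 1) ≤ 19/20 := by
      have h4 : 4 * (a * b) ≤ (a + b) ^ 2 := by nlinarith [sq_nonneg (a - b)]
      have e1 : (a + b) * (a * b) / (a + b - a * b) ^ 2 ≤ 4/9 := by
        rw [div_le_iff₀ (by positivity)]
        have hss : (a + b) ^ 2 ≤ a + b := by nlinarith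
        have ht1 : (0:ℝ) ≤ ((a + b) ^ 2 - 4 * (a * b))
            * (17 * (a + b) - 4 * (a * b) - (a + b) ^ 2) :=
          mul_nonneg (by linarith) (by linarith)
        have ht2 : (0:ℝ) ≤ (a + b) ^ 2 * ((1 - (a + b)) * (16 - (a + b))) :=
          mul_nonneg (sq_nonneg _) (mul_nonneg (by linarith) (by linarith))
        linarith [ht1, ht2]
      have e2 : a * b / (a + b + 1) ≤ 1/8 := by
        rw [div_le_iff₀ (by positivity)]
        nlinarith
      linarith
    linarith
  · have h1 : Real.Gamma ((1/2 : ℝ) + 1) = (1/2) * Real.sqrt Real.pi := by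
      rw [Real.Gamma_add_one (by norm_num), Real.Gamma_one_half_eq]
    have h2 : Real.Gamma ((1/2 : ℝ) + 1 + 1) = (3/4) * Real.sqrt Real.pi := by
      rw [Real.Gamma_add_one (by norm_num), h1]
      ring
    have h3 : Real.Gamma ((1 : ℝ) + 1) = 1 := by
      rw [Real.Gamma_add_one one_ne_zero, Real.Gamma_one]
      norm_num
    have hπ : (0:ℝ) < Real.sqrt Real.pi := Real.sqrt_pos.mpr Real.pi_pos
    rw [h1, h2, h3]
    rw [show (3/4 : ℝ) * Real.sqrt Real.pi / (1/2 * Real.sqrt Real.pi * 1) = 3/2 by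
      field_simp
      ring]
    norm_num
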